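/- For every integer i ≥ 1 and every k ∈ ℕ: α_i(k) < β_i(k+i+1) and β_i(k) < α_i(k+i+1). -/
import Mathlib


/-- `α_i(k) = ⌈k/(i+1)⌉ + 1` if `(i+1) ∣ k` and `k/(i+1)` is odd, and
`α_i(k) = ⌈k/(i+1)⌉` otherwise.  (Here `(k + i) / (i + 1) = ⌈k/(i+1)⌉`.) -/
def alph (i k : ℕ) : ℕ :=
  if (i + 1) ∣ k ∧ Odd (k / (i + 1)) then (k + i) / (i + 1) + 1 else (k + i) / (i + 1)

/-- `β_i(k) = ⌈k/(i+1)⌉ + 1` if `(i+1) ∣ k` and `k/(i+1)` is even, and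
`β_i(k) = ⌈k/(i+1)⌉` otherwise. -/
def bet (i k : ℕ) : ℕ :=
  if (i + 1) ∣ k ∧ Even (k / (i + 1)) then (k + i) / (i + 1) + 1 else (k + i) / (i + 1)

/-- For every `k`, `α_i(k) < β_i(k+i+1)` and `β_i(k) < α_i(k+i+1)`. -/
theorem alph_bet_diagonal (i : ℕ) (hi : 1 ≤ i) (k : ℕ) :
    alph i k < bet i (k + i + 1) ∧ bet i k < alph i (k + i + 1) := by
  have hpos : 0 < i + 1 := Nat.succ_pos i
  have hceil : (k + i + 1 + i) / (i + 1) = (k + i) / (i + 1) + 1 := by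
    have h : k + i + 1 + i = (k + i) + (i + 1) := by ring
    rw [h, Nat.add_div_right _ hpos]
  have hquot : (k + i + 1) / (i + 1) = k / (i + 1) + 1 := by
    have h : k + i + 1 = k + (i + 1) := by ring
    rw [h, Nat.add_div_right _ hpos]
  have hdvd : (i + 1) ∣ (k + i + 1) ↔ (i + 1) ∣ k := by
    rw [show k + i + 1 = k + (i + 1) by ring, Nat.dvd_add_self_right]
  unfold alph bet
  by_cases hd : (i + 1) ∣ k
  · have hceq : (k + i) / (i + 1) = k / (i + 1) := by
      obtain ⟨c, rfl⟩ := hd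
      rw [Nat.mul_div_cancel_left _ hpos, Nat.mul_add_div hpos,
        Nat.div_eq_of_lt (by omega), Nat.add_zero]
    by_cases hp : Odd (k / (i + 1))
    · have hne : ¬ Even (k / (i + 1)) := Nat.not_even_iff_odd.mpr hp
      have hp2 : Even ((k + i + 1) / (i + 1)) := by rw [hquot]; exact Odd.add_one hp
      have hnp2 : ¬ Odd ((k + i + 1) / (i + 1)) := Nat.not_odd_iff_even.mpr hp2
      rw [if_pos ⟨hd, hp⟩, if_pos ⟨hdvd.mpr hd, hp2⟩, if_neg (fun h => hne h.2),
        if_neg (fun h => hnp2 h.2), hceil]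
      omega
    · have he : Even (k / (i + 1)) := Nat.not_odd_iff_even.mp hp
      have hp2 : Odd ((k + i + 1) / (i + 1)) := by rw [hquot]; exact Even.add_one he
      have hnp2 : ¬ Even ((k + i + 1) / (i + 1)) := Nat.not_even_iff_odd.mpr hp2
      rw [if_neg (fun h => hp h.2), if_neg (fun h => hnp2 h.2),
        if_pos ⟨hd, he⟩, if_pos ⟨hdvd.mpr hd, hp2⟩, hceil]
      omega
  · have hnd : ¬ (i + 1) ∣ (k + i + 1) := fun h => hd (hdvd.mp h)
    rw [if_neg (fun h => hd h.1), if_neg (fun h => hnd h.1),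
      if_neg (fun h => hd h.1), if_neg (fun h => hnd h.1), hceil]
    omega
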